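/- Let k be odd, q = 2^{2k}, g a primitive element of GF(q), and r = g^{2^k-1}. Then r is not a cube in GF(q)*, and consequently the three maps x ↦ x^{2^l+1}, x ↦ r x^{2^l+1}, x ↦ r^{-1} x^{2^l+1} (for odd l coprime to k) jointly cover each element of GF(q) exactly three times as x ranges over GF(q). -/

import Mathlib

private lemma two_pow_odd_mod3 {m : ℕ} (hm : Odd m) : 2 ^ m % 3 = 2 := by
  obtain ⟨j, rfl⟩ := hm
  rw [pow_add, pow_mul, pow_one, Nat.mul_mod, Nat.pow_mod]
  norm_num

private lemma dvd_two_pow_sub_one_gcd {d A B : ℕ} (hd : d ≠ 0)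
    (hA : d ∣ 2 ^ A - 1) (hB : d ∣ 2 ^ B - 1) : d ∣ 2 ^ Nat.gcd A B - 1 := by
  haveI : NeZero d := ⟨hd⟩
  have key : ∀ m : ℕ, (d ∣ 2 ^ m - 1 ↔ (2 : ZMod d) ^ m = 1) := by
    intro m
    have h1 : (1 : ℕ) ≤ 2 ^ m := Nat.one_le_two_pow
    rw [← Nat.modEq_iff_dvd' h1, Nat.ModEq.comm, ← ZMod.natCast_eq_natCast_iff]
    push_cast
    rfl
  rw [key]
  exact pow_gcd_eq_one.2 ⟨(key A).1 hA, (key B).1 hB⟩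

theorem noncube_and_triple_cover (k l : ℕ) (hk : Odd k) (hl : Odd l) (hl0 : 0 < l)
    (hco : Nat.Coprime l k)
    (F : Type) [Field F] [Fintype F] [DecidableEq F]
    (hF : Fintype.card F = 2 ^ (2 * k))
    (g : F) (hg : ∀ x : F, x ≠ 0 → ∃ n : ℕ, x = g ^ n)
    (r : F) (hr : r = g ^ (2 ^ k - 1)) :
    (¬ ∃ y : F, r = y ^ 3) ∧
    (∀ c : F,
      (Finset.univ.filter (fun x : F => x ^ (2 ^ l + 1) = c)).card
      + (Finset.univ.filter (fun x : F => r * x ^ (2 ^ l + 1) = c)).card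
      + (Finset.univ.filter (fun x : F => r⁻¹ * x ^ (2 ^ l + 1) = c)).card = 3) := by
  classical
  set n : ℕ := 2 ^ l + 1 with hn_def
  set N : ℕ := 2 ^ (2 * k) - 1 with hN_def
  set e : ℕ := 2 ^ k - 1 with he_def
  have hk1 : 1 ≤ k := hk.pos
  have hl1 : 1 ≤ l := hl0
  have h2k : 2 ≤ 2 ^ k := by
    calc 2 = 2 ^ 1 := (pow_one 2).symm
    _ ≤ 2 ^ k := Nat.pow_le_pow_right (by norm_num) hk1
  have h2l : 2 ≤ 2 ^ l := by
    calc 2 = 2 ^ 1 := (pow_one 2).symm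
    _ ≤ 2 ^ l := Nat.pow_le_pow_right (by norm_num) hl1
  have h22k : 4 ≤ 2 ^ (2 * k) := by
    calc 4 = 2 ^ 2 := by norm_num
    _ ≤ 2 ^ (2 * k) := Nat.pow_le_pow_right (by norm_num) (by omega)
  have h22k3 : 2 ^ (2 * k) % 3 = 1 := by
    rw [pow_mul, Nat.pow_mod]; norm_num
  have h2k3 : 2 ^ k % 3 = 2 := two_pow_odd_mod3 hk
  have h2l3 : 2 ^ l % 3 = 2 := two_pow_odd_mod3 hl
  have hN3 : N % 3 = 0 := by rw [hN_def]; omega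
  have hn3 : n % 3 = 0 := by rw [hn_def]; omega
  have he3 : e % 3 = 1 := by rw [he_def]; omega
  have heN : e ≤ N := by
    have : 2 ^ k ≤ 2 ^ (2 * k) := Nat.pow_le_pow_right (by norm_num) (by omega)
    rw [he_def, hN_def]; omega
  have hN0 : 3 ≤ N := by rw [hN_def]; omega
  have hn0 : n ≠ 0 := by rw [hn_def]; omega
  -- g ≠ 0
  have hcard2 : 2 < Fintype.card F := by rw [hF]; omega
  have hg0 : g ≠ 0 := by
    intro h
    have hne : ((({0, 1} : Finset F)ᶜ : Finset F)).Nonempty := by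
      rw [← Finset.card_pos, Finset.card_compl]
      have : ({0, 1} : Finset F).card ≤ 2 := by
        apply le_trans (Finset.card_insert_le _ _); simp
      omega
    obtain ⟨x, hx⟩ := hne
    rw [Finset.mem_compl, Finset.mem_insert, Finset.mem_singleton] at hx
    push_neg at hx
    obtain ⟨m, hm⟩ := hg x hx.1
    rcases m with _ | m
    · simp at hm; exact hx.2 hm
    · rw [h, zero_pow (Nat.succ_ne_zero m)] at hm; exact hx.1 hm
  have hr0 : r ≠ 0 := by rw [hr]; exact pow_ne_zero _ hg0
  -- cyclic group structure
  set u : Fˣ := Units.mk0 g hg0 with hu_def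
  have hgen : ∀ v : Fˣ, v ∈ Subgroup.zpowers u := by
    intro v
    obtain ⟨m, hm⟩ := hg (v : F) v.ne_zero
    refine Subgroup.mem_zpowers_iff.mpr ⟨(m : ℤ), ?_⟩
    rw [zpow_natCast]
    ext
    rw [Units.val_pow_eq_pow_val]
    simpa [hu_def] using hm.symm
  have horder : orderOf u = N := by
    have h := orderOf_eq_card_of_forall_mem_zpowers hgen
    rw [Nat.card_eq_fintype_card, Fintype.card_units, hF] at h
    exact h
  have hmod : ∀ a b : ℕ, (g ^ a = g ^ b ↔ a ≡ b [MOD N]) := by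
    intro a b
    constructor
    · intro h
      have h' : u ^ a = u ^ b := by
        ext; rw [Units.val_pow_eq_pow_val, Units.val_pow_eq_pow_val]; simpa [hu_def] using h
      rwa [pow_eq_pow_iff_modEq, horder] at h'
    · intro h
      have h' : u ^ a = u ^ b := by rwa [pow_eq_pow_iff_modEq, horder]
      have := congrArg Units.val h'
      simpa [hu_def] using this
  have hgN : g ^ N = 1 := by
    have := (hmod N 0).2 (Nat.modEq_zero_iff_dvd.2 dvd_rfl)
    simpa using this
  -- gcd computation
  have hgcd : Nat.gcd n N = 3 := by
    have hndvd : n ∣ 2 ^ (2 * l) - 1 := by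
      refine ⟨2 ^ l - 1, ?_⟩
      have h1 : (1 : ℕ) ≤ 2 ^ l := by omega
      have h2 : (1 : ℕ) ≤ 2 ^ (2 * l) := Nat.one_le_two_pow
      zify [h1, h2]
      rw [two_mul, pow_add]
      rw [hn_def]; push_cast
      ring
    have hd0 : Nat.gcd n N ≠ 0 := by
      intro h; exact hn0 (Nat.eq_zero_of_gcd_eq_zero_left h)
    have hdA : Nat.gcd n N ∣ 2 ^ (2 * l) - 1 := (Nat.gcd_dvd_left n N).trans hndvd
    have hdB : Nat.gcd n N ∣ 2 ^ (2 * k) - 1 := Nat.gcd_dvd_right n N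
    have h3 := dvd_two_pow_sub_one_gcd hd0 hdA hdB
    have hgg : Nat.gcd (2 * l) (2 * k) = 2 := by
      rw [Nat.gcd_mul_left, hco]
    rw [hgg] at h3
    norm_num at h3
    have h3' : 3 ∣ Nat.gcd n N :=
      Nat.dvd_gcd (Nat.dvd_of_mod_eq_zero hn3) (Nat.dvd_of_mod_eq_zero hN3)
    exact Nat.dvd_antisymm h3 h3'
  obtain ⟨n', hn'⟩ : 3 ∣ n := Nat.dvd_of_mod_eq_zero hn3
  obtain ⟨M, hM⟩ : 3 ∣ N := Nat.dvd_of_mod_eq_zero hN3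
  have hM1 : 1 ≤ M := by omega
  have hcop : Nat.Coprime n' M := by
    have := Nat.gcd_mul_left 3 n' M
    rw [← hn', ← hM, hgcd] at this
    unfold Nat.Coprime
    omega
  -- solvability criterion
  have necessary : ∀ a : ℕ, (∃ x : F, x ^ n = g ^ a) → 3 ∣ a := by
    rintro a ⟨x, hx⟩
    have hx0 : x ≠ 0 := by
      intro h
      rw [h, zero_pow hn0] at hx
      exact pow_ne_zero a hg0 hx.symm
    obtain ⟨m, hm⟩ := hg x hx0
    rw [hm, ← pow_mul] at hx
    have h1 := ((hmod (m * n) a).1 hx).of_dvd (Nat.dvd_of_mod_eq_zero hN3)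
    have h2 : m * n % 3 = 0 := by rw [Nat.mul_mod, hn3]; simp
    have h3 : m * n % 3 = a % 3 := h1
    omega
  have solvable : ∀ a : ℕ, 3 ∣ a → ∃ x : F, x ≠ 0 ∧ x ^ n = g ^ a := by
    have hbez : ∃ t : ℕ, n * t ≡ 3 [MOD N] := by
      have h := Nat.gcd_eq_gcd_ab n N
      rw [hgcd] at h
      set p := Nat.gcdA n N with hp
      set q := Nat.gcdB n N with hq
      have hNz : (N : ℤ) ≠ 0 := by positivity
      refine ⟨(p % N).toNat, ?_⟩
      rw [Nat.modEq_iff_dvd]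
      push_cast
      rw [Int.toNat_of_nonneg (Int.emod_nonneg _ hNz)]
      have hdm := Int.mul_ediv_add_emod p (N : ℤ)
      refine ⟨q + n * (p / N), ?_⟩
      have h3 : (3 : ℤ) = n * p + N * q := by exact_mod_cast h
      have hn_c : (n : ℤ) = 2 ^ l + 1 := by rw [hn_def]; push_cast; ring
      linear_combination h3 - (n : ℤ) * hdm
    rintro a ⟨a', rfl⟩
    obtain ⟨t, ht⟩ := hbez
    refine ⟨g ^ (t * a'), pow_ne_zero _ hg0, ?_⟩
    rw [← pow_mul, hmod]
    have := ht.mul_right a'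
    rwa [show t * a' * n = n * t * a' from by ring]
  -- counting solutions when solvable
  set ω : F := g ^ M with hω_def
  have hMn : M * n = N * n' := by rw [hn', hM]; ring
  have hS1 : Finset.univ.filter (fun x : F => x ^ n = 1) = {1, ω, ω ^ 2} := by
    ext x
    simp only [Finset.mem_filter, Finset.mem_univ, true_and, Finset.mem_insert,
      Finset.mem_singleton]
    constructor
    · intro hx
      have hx0 : x ≠ 0 := by
        intro h; rw [h, zero_pow hn0] at hx; exact one_ne_zero hx.symm
      obtain ⟨m, hm⟩ := hg x hx0
      rw [hm, ← pow_mul, show (1 : F) = g ^ 0 from (pow_zero g).symm] at hx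
      have h1 : N ∣ m * n := Nat.modEq_zero_iff_dvd.1 ((hmod (m * n) 0).1 hx)
      obtain ⟨c, hc⟩ := h1
      have h4 : M ∣ m * n' := by
        refine ⟨c, ?_⟩
        have h5 : 3 * (m * n') = 3 * (M * c) := by
          calc 3 * (m * n') = m * (3 * n') := by ring
          _ = m * n := by rw [← hn']
          _ = N * c := hc
          _ = 3 * (M * c) := by rw [hM]; ring
        omega
      have h5 : M ∣ m := (Nat.Coprime.dvd_of_dvd_mul_right hcop.symm h4)
      obtain ⟨s, hs⟩ := h5
      have hω3 : ω ^ 3 = 1 := by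
        rw [hω_def, ← pow_mul, show M * 3 = N from by omega, hgN]
      have hxω : x = ω ^ s := by rw [hm, hs, pow_mul, hω_def]
      have hxω' : x = ω ^ (s % 3) := by
        conv_lhs => rw [hxω, ← Nat.div_add_mod s 3]
        rw [pow_add, pow_mul, hω3, one_pow, one_mul]
      rcases (show s % 3 = 0 ∨ s % 3 = 1 ∨ s % 3 = 2 by omega) with h | h | h <;>
        rw [h] at hxω' <;> simp [hxω']
    · have hωn : ω ^ n = 1 := by
        rw [hω_def, ← pow_mul, hMn, pow_mul, hgN, one_pow]
      rintro (rfl | rfl | rfl)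
      · exact one_pow n
      · exact hωn
      · rw [← pow_mul, pow_mul', hωn, one_pow]
  have hS1card : (Finset.univ.filter (fun x : F => x ^ n = 1)).card = 3 := by
    rw [hS1]
    have hd1 : (1 : F) ≠ ω := by
      intro h
      have : g ^ 0 = g ^ M := by rw [pow_zero]; exact h
      have h2 := (hmod 0 M).1 this
      have h3 : 0 % N = M % N := h2
      rw [Nat.zero_mod, Nat.mod_eq_of_lt (by omega)] at h3
      omega
    have hd2 : (1 : F) ≠ ω ^ 2 := by
      intro h
      have : g ^ 0 = g ^ (M * 2) := by
        rw [pow_zero, hω_def, ← pow_mul] at *; exact h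
      have h2 := (hmod 0 (M * 2)).1 this
      have h3 : 0 % N = (M * 2) % N := h2
      rw [Nat.zero_mod, Nat.mod_eq_of_lt (by omega)] at h3
      omega
    have hd3 : ω ≠ ω ^ 2 := by
      intro h
      have : g ^ M = g ^ (M * 2) := by
        rw [hω_def, ← pow_mul] at *; exact h
      have h2 := (hmod M (M * 2)).1 this
      have h3 : M % N = (M * 2) % N := h2
      rw [Nat.mod_eq_of_lt (by omega), Nat.mod_eq_of_lt (by omega)] at h3
      omega
    rw [Finset.card_insert_of_notMem (by simp [hd1, hd2]),
      Finset.card_insert_of_notMem (by simp [hd3]), Finset.card_singleton]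
  have count3 : ∀ d : F, ∀ x₀ : F, x₀ ≠ 0 → x₀ ^ n = d →
      (Finset.univ.filter (fun x : F => x ^ n = d)).card = 3 := by
    intro d x₀ h0 hx₀
    have hd0 : d ≠ 0 := hx₀ ▸ pow_ne_zero n h0
    rw [← hS1card]
    apply Finset.card_bij (fun x _ => x * x₀⁻¹)
    · intro x hx
      simp only [Finset.mem_filter, Finset.mem_univ, true_and] at hx ⊢
      rw [mul_pow, hx, inv_pow, hx₀, mul_inv_cancel₀ hd0]
    · intro x hx y hy hxy
      exact mul_right_cancel₀ (inv_ne_zero h0) hxy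
    · intro b hb
      simp only [Finset.mem_filter, Finset.mem_univ, true_and] at hb ⊢
      refine ⟨b * x₀, ?_, by rw [mul_assoc, mul_inv_cancel₀ h0, mul_one]⟩
      rw [mul_pow, hb, hx₀, one_mul]
  have main : ∀ a : ℕ,
      (Finset.univ.filter (fun x : F => x ^ n = g ^ a)).card = if 3 ∣ a then 3 else 0 := by
    intro a
    split_ifs with h
    · obtain ⟨x, hx0, hx⟩ := solvable a h
      exact count3 _ x hx0 hx
    · rw [Finset.card_eq_zero, Finset.filter_eq_empty_iff]
      intro x _
      intro hx
      exact h (necessary a ⟨x, hx⟩)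
  constructor
  · rintro ⟨y, hy⟩
    have hy0 : y ≠ 0 := by
      intro h; rw [h, zero_pow (by norm_num : (3:ℕ) ≠ 0)] at hy; exact hr0 hy
    obtain ⟨m, hm⟩ := hg y hy0
    rw [hr, hm, ← pow_mul] at hy
    have h1 := ((hmod e (m * 3)).1 hy).of_dvd (Nat.dvd_of_mod_eq_zero hN3)
    have h2 : e % 3 = (m * 3) % 3 := h1
    omega
  · intro c
    by_cases hc : c = 0
    · subst hc
      have e1 : Finset.univ.filter (fun x : F => x ^ n = 0) = {0} := by
        ext x; simp [pow_eq_zero_iff hn0]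
      have e2 : Finset.univ.filter (fun x : F => r * x ^ n = 0) = {0} := by
        ext x; simp [pow_eq_zero_iff hn0, mul_eq_zero, hr0]
      have e3 : Finset.univ.filter (fun x : F => r⁻¹ * x ^ n = 0) = {0} := by
        ext x; simp [pow_eq_zero_iff hn0, mul_eq_zero, inv_eq_zero, hr0]
      rw [e1, e2, e3]
      simp
    · obtain ⟨a, ha⟩ := hg c hc
      have hrinv : r⁻¹ = g ^ (N - e) := by
        apply inv_eq_of_mul_eq_one_right
        rw [hr, ← pow_add, show e + (N - e) = N from by omega, hgN]
      have hEq2 : g ^ (N - e + a) = r⁻¹ * c := by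
        rw [pow_add, hrinv, ha]
      have hEq3 : g ^ (e + a) = r * c := by
        rw [pow_add, hr, ha]
      have f2 : Finset.univ.filter (fun x : F => r * x ^ n = c)
          = Finset.univ.filter (fun x : F => x ^ n = g ^ (N - e + a)) := by
        ext x
        simp only [Finset.mem_filter, Finset.mem_univ, true_and]
        rw [hEq2]
        constructor
        · intro h; rw [← h]; field_simp
        · intro h; rw [h]; field_simp
      have f3 : Finset.univ.filter (fun x : F => r⁻¹ * x ^ n = c)
          = Finset.univ.filter (fun x : F => x ^ n = g ^ (e + a)) := by
        ext x
        simp only [Finset.mem_filter, Finset.mem_univ, true_and]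
        rw [hEq3]
        constructor
        · intro h; rw [← h, ← mul_assoc, mul_inv_cancel₀ hr0, one_mul]
        · intro h; rw [h, ← mul_assoc, inv_mul_cancel₀ hr0, one_mul]
      rw [f2, f3, ha, main a, main (N - e + a), main (e + a)]
      rcases (show a % 3 = 0 ∨ a % 3 = 1 ∨ a % 3 = 2 by omega) with h | h | h
      · rw [if_pos (by omega), if_neg (by omega), if_neg (by omega)]
      · rw [if_neg (by omega), if_pos (by omega), if_neg (by omega)]
      · rw [if_neg (by omega), if_neg (by omega), if_pos (by omega)]
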